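/- Let D = Σ_{i=2}^n B_i where (B_i)_{2 ≤ i ≤ n} are independent Bernoulli random variables with P(B_i = 1) = 1/(i-1). For every 0 < ε < 3/2 there exists N such that for all n ≥ N, P(|D - ln n| > ε ln n) ≤ 2 n^{-ε²/12}. -/

import Mathlib

open Real

lemma aux_log_lb {x : ℝ} (hx : 0 ≤ x) (hx2 : x ≤ 2) : x / 3 ≤ Real.log (1 + x) := by
  have h1 : (0:ℝ) < 1 + x := by linarith
  rw [Real.le_log_iff_exp_le h1]
  have h2 : 1 - x/3 ≤ Real.exp (-(x/3)) := by
    have := Real.add_one_le_exp (-(x/3)); linarith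
  have hprod : Real.exp (x/3) * Real.exp (-(x/3)) = 1 := by
    rw [← Real.exp_add]; norm_num
  have hexp_pos := (Real.exp_pos (x/3)).le
  have key : Real.exp (x/3) * (1 - x/3) ≤ 1 := by
    calc Real.exp (x/3) * (1 - x/3) ≤ Real.exp (x/3) * Real.exp (-(x/3)) :=
          mul_le_mul_of_nonneg_left h2 hexp_pos
      _ = 1 := hprod
  nlinarith [Real.exp_pos (x/3)]

-- L2 : ε²/6 ≤ (1+ε)log(1+ε) - ε  for 0 ≤ ε ≤ 2
lemma aux_upper_exponent {e : ℝ} (he : 0 ≤ e) (he2 : e ≤ 2) :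
    e ^ 2 / 6 ≤ (1 + e) * Real.log (1 + e) - e := by
  set f : ℝ → ℝ := fun x => (1 + x) * Real.log (1 + x) - x - x ^ 2 / 6 with hf
  have hderiv : ∀ x ∈ Set.Icc (0:ℝ) 2, HasDerivAt f (Real.log (1 + x) - x / 3) x := by
    intro x hx
    have h1 : (0:ℝ) < 1 + x := by have := hx.1; linarith
    have hlog : HasDerivAt (fun y : ℝ => Real.log (1 + y)) (1 / (1 + x)) x := by
      have := (Real.hasDerivAt_log h1.ne').comp x ((hasDerivAt_id x).const_add 1)
      simpa [one_div, Function.comp_def] using this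
    have hmul : HasDerivAt (fun y : ℝ => (1 + y) * Real.log (1 + y))
        (1 * Real.log (1 + x) + (1 + x) * (1 / (1 + x))) x :=
      HasDerivAt.mul ((hasDerivAt_id x).const_add 1) hlog
    have := (hmul.sub (hasDerivAt_id x)).sub
      (((hasDerivAt_pow 2 x)).div_const 6)
    refine this.congr_deriv ?_
    rw [mul_one_div_cancel h1.ne']
    norm_num <;> ring
  have hmono : MonotoneOn f (Set.Icc (0:ℝ) 2) := by
    apply monotoneOn_of_deriv_nonneg (convex_Icc _ _)
    · exact continuousOn_of_forall_continuousAt (fun x hx => (hderiv x hx).continuousAt)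
    · intro x hx
      rw [interior_Icc] at hx
      exact ((hderiv x ⟨hx.1.le, hx.2.le⟩).differentiableAt).differentiableWithinAt
    · intro x hx
      rw [interior_Icc] at hx
      have hx' : x ∈ Set.Icc (0:ℝ) 2 := ⟨hx.1.le, hx.2.le⟩
      rw [(hderiv x hx').deriv]
      have := aux_log_lb hx.1.le hx.2.le
      linarith
  have h0 : f 0 = 0 := by simp [hf]
  have := hmono (Set.mem_Icc.mpr ⟨le_refl 0, by norm_num⟩) (Set.mem_Icc.mpr ⟨he, he2⟩) he
  rw [h0] at this
  simp only [hf] at this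
  linarith

-- L3 : ε²/12 ≤ ε + (1-ε)log(1-ε)  for 0 ≤ ε < 1
lemma aux_lower_exponent {e : ℝ} (he : 0 ≤ e) (he1 : e < 1) :
    e ^ 2 / 12 ≤ e + (1 - e) * Real.log (1 - e) := by
  set f : ℝ → ℝ := fun x => x + (1 - x) * Real.log (1 - x) - x ^ 2 / 12 with hf
  have hderiv : ∀ x ∈ Set.Icc (0:ℝ) e, HasDerivAt f (-Real.log (1 - x) - x / 6) x := by
    intro x hx
    have h1 : (0:ℝ) < 1 - x := by have := hx.2; linarith
    have hlog : HasDerivAt (fun y : ℝ => Real.log (1 - y)) (-(1 / (1 - x))) x := by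
      have := (Real.hasDerivAt_log h1.ne').comp x (((hasDerivAt_id x).const_sub 1))
      simpa [one_div, Function.comp_def] using this
    have hmul : HasDerivAt (fun y : ℝ => (1 - y) * Real.log (1 - y))
        ((-1) * Real.log (1 - x) + (1 - x) * (-(1 / (1 - x)))) x :=
      HasDerivAt.mul (by simpa using (hasDerivAt_id x).const_sub 1) hlog
    have := ((hasDerivAt_id x).add hmul).sub ((hasDerivAt_pow 2 x).div_const 12)
    refine this.congr_deriv ?_
    rw [mul_neg, mul_one_div_cancel h1.ne']
    norm_num <;> ring
  have hmono : MonotoneOn f (Set.Icc (0:ℝ) e) := by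
    apply monotoneOn_of_deriv_nonneg (convex_Icc _ _)
    · exact continuousOn_of_forall_continuousAt (fun x hx => (hderiv x hx).continuousAt)
    · intro x hx
      rw [interior_Icc] at hx
      exact ((hderiv x ⟨hx.1.le, hx.2.le⟩).differentiableAt).differentiableWithinAt
    · intro x hx
      rw [interior_Icc] at hx
      have hx' : x ∈ Set.Icc (0:ℝ) e := ⟨hx.1.le, hx.2.le⟩
      rw [(hderiv x hx').deriv]
      have h1 : (0:ℝ) < 1 - x := by have := hx.2; linarith
      have hlog_le : Real.log (1 - x) ≤ -x := by
        have := Real.log_le_sub_one_of_pos h1; linarith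
      linarith [hx.1]
  have h0 : f 0 = 0 := by simp [hf]
  have := hmono (Set.mem_Icc.mpr ⟨le_refl 0, he⟩) (Set.mem_Icc.mpr ⟨he, le_refl e⟩) he
  rw [h0] at this
  simp only [hf] at this
  linarith

lemma sum_inv_bounds (n : ℕ) (hn : 2 ≤ n) :
    Real.log n ≤ (∑ i ∈ Finset.Icc 2 n, 1 / ((i:ℝ) - 1)) ∧
    (∑ i ∈ Finset.Icc 2 n, 1 / ((i:ℝ) - 1)) ≤ 1 + Real.log n := by
  have hre : (∑ i ∈ Finset.Icc 2 n, 1 / ((i:ℝ) - 1))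
      = ((harmonic (n-1) : ℚ) : ℝ) := by
    rw [harmonic_eq_sum_Icc]
    push_cast
    refine Finset.sum_nbij' (fun i => i - 1) (fun j => j + 1) ?_ ?_ ?_ ?_ ?_
    · intro a ha; simp only [Finset.mem_Icc] at *; omega
    · intro a ha; simp only [Finset.mem_Icc] at *; omega
    · intro a ha; simp only [Finset.mem_Icc] at ha; show a - 1 + 1 = a; omega
    · intro a ha; simp only [Finset.mem_Icc] at ha; show a + 1 - 1 = a; omega
    · intro a ha
      simp only [Finset.mem_Icc] at ha
      have : ((a - 1 : ℕ) : ℝ) = (a : ℝ) - 1 := by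
        have : 1 ≤ a := by omega
        push_cast [this]; ring
      rw [this, one_div]
  rw [hre]
  constructor
  · have h := log_add_one_le_harmonic (n-1)
    have : ((n - 1 : ℕ) : ℝ) + 1 = (n : ℝ) := by
      have : 1 ≤ n := by omega
      push_cast [this]; ring
    rw [← this]
    calc Real.log (((n-1:ℕ):ℝ) + 1) = Real.log ((((n-1)+1 : ℕ)):ℝ) := by push_cast; ring_nf
      _ ≤ _ := h
  · calc ((harmonic (n-1) : ℚ) : ℝ) ≤ 1 + Real.log (n-1:ℕ) := harmonic_le_one_add_log _
      _ ≤ 1 + Real.log n := by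
          have h1 : (0:ℝ) < ((n-1:ℕ):ℝ) := by
            have : (1:ℕ) ≤ n - 1 := by omega
            exact_mod_cast Nat.lt_of_lt_of_le Nat.zero_lt_one this
          have h2 : ((n-1:ℕ):ℝ) ≤ (n:ℝ) := by exact_mod_cast Nat.sub_le n 1
          linarith [Real.log_le_log h1 h2]

open MeasureTheory ProbabilityTheory in
lemma bernoulli_mgf {Ω : Type*} [MeasureSpace Ω] [IsProbabilityMeasure (ℙ : Measure Ω)]
    (X : Ω → ℝ) (hm : Measurable X) (h01 : ∀ ω, X ω = 0 ∨ X ω = 1)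
    {p : ℝ} (hp0 : 0 ≤ p) (hP : ℙ {ω | X ω = 1} = ENNReal.ofReal p) (t : ℝ) :
    mgf X ℙ t = 1 + (Real.exp t - 1) * p := by
  have hs : MeasurableSet {ω | X ω = 1} := hm (measurableSet_singleton 1)
  have hXint : Integrable X ℙ := by
    refine Integrable.mono' (integrable_const 1) hm.aestronglyMeasurable ?_
    filter_upwards with ω
    rcases h01 ω with h | h <;> simp [h]
  have hEX : ∫ ω, X ω ∂ℙ = p := by
    have hind : X = Set.indicator {ω | X ω = 1} (fun _ => (1:ℝ)) := by
      funext ω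
      rcases h01 ω with h | h <;>
        simp [Set.indicator_apply, Set.mem_setOf_eq, h]
    rw [hind, integral_indicator_const _ hs, measureReal_def, hP, ENNReal.toReal_ofReal hp0, smul_eq_mul, mul_one]
  have hpt : ∀ ω, Real.exp (t * X ω) = 1 + (Real.exp t - 1) * X ω := by
    intro ω
    rcases h01 ω with h | h <;> simp [h]
  rw [mgf]
  simp_rw [hpt]
  rw [integral_add (integrable_const 1) (hXint.const_mul _), integral_const,
    integral_const_mul, hEX]
  simp

open MeasureTheory ProbabilityTheory
open scoped ProbabilityTheory

theorem root_degree_concentration {Ω : Type*} [MeasureSpace Ω]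
    [IsProbabilityMeasure (ℙ : Measure Ω)]
    (B : ℕ → Ω → ℝ) (hmeas : ∀ i, Measurable (B i))
    (h01 : ∀ i, 2 ≤ i → ∀ ω, B i ω = 0 ∨ B i ω = 1)
    (hp : ∀ i, 2 ≤ i →
      ℙ {ω | B i ω = 1} = ENNReal.ofReal (1 / ((i : ℝ) - 1)))
    (hindep : iIndepFun B ℙ)
    (ε : ℝ) (hε : 0 < ε) (hε' : ε < 3 / 2) :
    ∃ N : ℕ, ∀ n : ℕ, N ≤ n →
      (ℙ {ω | ε * Real.log n <
          |(∑ i ∈ Finset.Icc 2 n, B i ω) - Real.log n|}).toReal ≤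
        2 * (n : ℝ) ^ (-ε ^ 2 / 12) := by
  refine ⟨max 2 ⌈Real.exp (12 / ε)⌉₊, fun n hn => ?_⟩
  have hn2 : 2 ≤ n := le_trans (le_max_left _ _) hn
  have hnpos : (0:ℝ) < n := by positivity
  set L := Real.log n with hLdef
  have hnR : Real.exp (12 / ε) ≤ (n:ℝ) := by
    have h1 : ⌈Real.exp (12 / ε)⌉₊ ≤ n := le_trans (le_max_right _ _) hn
    exact le_trans (Nat.le_ceil _) (by exact_mod_cast h1)
  have hL : 12 / ε ≤ L := by
    rw [← Real.log_exp (12 / ε)]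
    exact Real.log_le_log (Real.exp_pos _) hnR
  have hL0 : 0 ≤ L := le_trans (by positivity) hL
  have h12 : 12 ≤ ε * L := by
    have := mul_le_mul_of_nonneg_left hL hε.le
    rwa [mul_div_cancel₀ _ hε.ne'] at this
  -- the sum as a function
  set D : Ω → ℝ := ∑ i ∈ Finset.Icc 2 n, B i with hDdef
  have hDapp : ∀ ω, D ω = ∑ i ∈ Finset.Icc 2 n, B i ω := by
    intro ω; rw [hDdef]; simp [Finset.sum_apply]
  have hD_meas : Measurable D := by
    have : D = fun ω => ∑ i ∈ Finset.Icc 2 n, B i ω := funext hDapp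
    rw [this]
    exact Finset.measurable_sum _ (fun i _ => hmeas i)
  have hD_nonneg : ∀ ω, 0 ≤ D ω := by
    intro ω; rw [hDapp]
    apply Finset.sum_nonneg
    intro i hi
    rcases h01 i (Finset.mem_Icc.mp hi).1 ω with h | h <;> simp [h]
  have hD_le : ∀ ω, D ω ≤ n := by
    intro ω; rw [hDapp]
    calc ∑ i ∈ Finset.Icc 2 n, B i ω ≤ ∑ _i ∈ Finset.Icc 2 n, (1:ℝ) := by
          apply Finset.sum_le_sum
          intro i hi
          rcases h01 i (Finset.mem_Icc.mp hi).1 ω with h | h <;> simp [h]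
      _ = ((Finset.Icc 2 n).card : ℝ) := by simp
      _ ≤ n := by
          have hc : (Finset.Icc 2 n).card = n - 1 := by rw [Nat.card_Icc]; omega
          rw [hc]
          exact_mod_cast Nat.sub_le n 1
  have hInt : ∀ t : ℝ, Integrable (fun ω => Real.exp (t * D ω)) ℙ := by
    intro t
    refine Integrable.mono' (integrable_const (Real.exp (|t| * n)))
      ((hD_meas.const_mul t).exp.aestronglyMeasurable) ?_
    filter_upwards with ω
    rw [Real.norm_eq_abs, Real.abs_exp]
    apply Real.exp_le_exp.mpr
    calc t * D ω ≤ |t * D ω| := le_abs_self _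
      _ = |t| * |D ω| := abs_mul _ _
      _ ≤ |t| * n := by
          apply mul_le_mul_of_nonneg_left _ (abs_nonneg t)
          rw [abs_of_nonneg (hD_nonneg ω)]; exact hD_le ω
  -- harmonic sum
  set S : ℝ := ∑ i ∈ Finset.Icc 2 n, 1 / ((i:ℝ) - 1) with hSdef
  obtain ⟨hS1, hS2⟩ := sum_inv_bounds n hn2
  -- mgf bound
  have hmgf : ∀ t : ℝ, mgf D ℙ t ≤ Real.exp ((Real.exp t - 1) * S) := by
    intro t
    rw [hDdef, hindep.mgf_sum hmeas]
    have heach : ∀ i ∈ Finset.Icc 2 n,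
        mgf (B i) ℙ t = 1 + (Real.exp t - 1) * (1 / ((i:ℝ) - 1)) := by
      intro i hi
      have hi2 : 2 ≤ i := (Finset.mem_Icc.mp hi).1
      have hp0 : (0:ℝ) ≤ 1 / ((i:ℝ) - 1) := by
        have : (1:ℝ) ≤ (i:ℝ) - 1 := by
          have : (2:ℝ) ≤ (i:ℝ) := by exact_mod_cast hi2
          linarith
        positivity
      exact bernoulli_mgf (B i) (hmeas i) (h01 i hi2) hp0 (hp i hi2) t
    calc ∏ i ∈ Finset.Icc 2 n, mgf (B i) ℙ t
        = ∏ i ∈ Finset.Icc 2 n, (1 + (Real.exp t - 1) * (1 / ((i:ℝ) - 1))) :=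
          Finset.prod_congr rfl heach
      _ ≤ ∏ i ∈ Finset.Icc 2 n, Real.exp ((Real.exp t - 1) * (1 / ((i:ℝ) - 1))) := by
          apply Finset.prod_le_prod
          · intro i hi
            have hi2 : 2 ≤ i := (Finset.mem_Icc.mp hi).1
            have hii : (1:ℝ) ≤ (i:ℝ) - 1 := by
              have : (2:ℝ) ≤ (i:ℝ) := by exact_mod_cast hi2
              linarith
            have hp1 : 1 / ((i:ℝ) - 1) ≤ 1 := by
              rw [div_le_one (by linarith)]; linarith
            have hp0 : (0:ℝ) ≤ 1 / ((i:ℝ) - 1) := by positivity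
            nlinarith [Real.exp_pos t]
          · intro i hi
            linarith [Real.add_one_le_exp ((Real.exp t - 1) * (1 / ((i:ℝ) - 1)))]
      _ = Real.exp ((Real.exp t - 1) * S) := by
          rw [← Real.exp_sum, hSdef, Finset.mul_sum]
  -- upper tail
  have hA : (ℙ {ω | (1+ε)*L ≤ D ω}).toReal ≤ Real.exp (-(ε^2/12) * L) := by
    set t1 := Real.log (1+ε) with ht1def
    have ht1 : 0 ≤ t1 := Real.log_nonneg (by linarith)
    have he1 : Real.exp t1 = 1 + ε := Real.exp_log (by linarith)
    have hg := aux_upper_exponent hε.le (by linarith)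
    calc (ℙ {ω | (1+ε)*L ≤ D ω}).toReal
        ≤ Real.exp (-t1 * ((1+ε)*L)) * mgf D ℙ t1 :=
          measure_ge_le_exp_mul_mgf ((1+ε)*L) ht1 (hInt t1)
      _ ≤ Real.exp (-t1 * ((1+ε)*L)) * Real.exp ((Real.exp t1 - 1) * S) :=
          mul_le_mul_of_nonneg_left (hmgf t1) (Real.exp_pos _).le
      _ = Real.exp (ε * S - (1+ε) * t1 * L) := by
          rw [← Real.exp_add, he1]; ring_nf
      _ ≤ Real.exp (-(ε^2/12) * L) := by
          apply Real.exp_le_exp.mpr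
          have hSa : ε * S ≤ ε * (1 + L) := mul_le_mul_of_nonneg_left hS2 hε.le
          have h6 : (ε + ε^2/6) * L ≤ (1+ε) * t1 * L := by
            apply mul_le_mul_of_nonneg_right _ hL0
            rw [ht1def]; linarith
          nlinarith
  -- lower tail
  have hB : (ℙ {ω | (ε-1)*L < -(D ω)}).toReal ≤ Real.exp (-(ε^2/12) * L) := by
    rcases le_or_gt 1 ε with hε1 | hε1
    · have hempty : {ω | (ε-1)*L < -(D ω)} = ∅ := by
        ext ω
        simp only [Set.mem_setOf_eq, Set.mem_empty_iff_false, iff_false, not_lt]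
        have h1 : -(D ω) ≤ 0 := neg_nonpos.mpr (hD_nonneg ω)
        have h2 : 0 ≤ (ε-1)*L := mul_nonneg (by linarith) hL0
        linarith
      rw [hempty]
      simp [Real.exp_pos]
      positivity
    · set t2 := -Real.log (1-ε) with ht2def
      have h1ε : (0:ℝ) < 1 - ε := by linarith
      have ht2 : 0 ≤ t2 := by
        rw [ht2def, neg_nonneg]
        exact Real.log_nonpos (by linarith) (by linarith)
      have he2 : Real.exp (-t2) = 1 - ε := by
        rw [ht2def, neg_neg]; exact Real.exp_log h1ε
      have hg := aux_lower_exponent hε.le hε1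
      have hIntneg : Integrable (fun ω => Real.exp (t2 * (-D) ω)) ℙ := by
        have := hInt (-t2)
        simpa [neg_mul, mul_neg] using this
      calc (ℙ {ω | (ε-1)*L < -(D ω)}).toReal
          ≤ (ℙ {ω | (ε-1)*L ≤ (-D) ω}).toReal := by
            apply ENNReal.toReal_mono (measure_ne_top _ _)
            apply measure_mono
            intro ω hω
            simp only [Set.mem_setOf_eq, Pi.neg_apply] at *
            linarith
        _ ≤ Real.exp (-t2 * ((ε-1)*L)) * mgf (-D) ℙ t2 :=
            measure_ge_le_exp_mul_mgf ((ε-1)*L) ht2 hIntneg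
        _ ≤ Real.exp (-t2 * ((ε-1)*L)) * Real.exp ((Real.exp (-t2) - 1) * S) := by
            rw [mgf_neg]
            exact mul_le_mul_of_nonneg_left (hmgf (-t2)) (Real.exp_pos _).le
        _ = Real.exp ((1-ε) * t2 * L - ε * S) := by
            rw [← Real.exp_add, he2]; ring_nf
        _ ≤ Real.exp (-(ε^2/12) * L) := by
            apply Real.exp_le_exp.mpr
            have hSb : ε * L ≤ ε * S := mul_le_mul_of_nonneg_left hS1 hε.le
            have h7 : (1-ε) * t2 * L ≤ (ε - ε^2/12) * L := by
              apply mul_le_mul_of_nonneg_right _ hL0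
              rw [ht2def]; nlinarith
            nlinarith
  -- combine
  have hrpow : (n:ℝ) ^ (-ε ^ 2 / 12) = Real.exp (-(ε^2/12) * L) := by
    rw [Real.rpow_def_of_pos hnpos]
    ring_nf
    rw [hLdef]; ring_nf
  have hsub : {ω | ε * L < |(∑ i ∈ Finset.Icc 2 n, B i ω) - L|}
      ⊆ {ω | (1+ε)*L ≤ D ω} ∪ {ω | (ε-1)*L < -(D ω)} := by
    intro ω hω
    simp only [Set.mem_setOf_eq, Set.mem_union] at *
    rw [← hDapp ω] at hω
    rcases lt_abs.mp hω with h | h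
    · left; linarith
    · right; linarith
  calc (ℙ {ω | ε * L < |(∑ i ∈ Finset.Icc 2 n, B i ω) - L|}).toReal
      ≤ (ℙ ({ω | (1+ε)*L ≤ D ω} ∪ {ω | (ε-1)*L < -(D ω)})).toReal :=
        ENNReal.toReal_mono (measure_ne_top _ _) (measure_mono hsub)
    _ ≤ ((ℙ {ω | (1+ε)*L ≤ D ω}) + (ℙ {ω | (ε-1)*L < -(D ω)})).toReal :=
        ENNReal.toReal_mono (by finiteness) (measure_union_le _ _)
    _ = (ℙ {ω | (1+ε)*L ≤ D ω}).toReal + (ℙ {ω | (ε-1)*L < -(D ω)}).toReal :=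
        ENNReal.toReal_add (measure_ne_top _ _) (measure_ne_top _ _)
    _ ≤ Real.exp (-(ε^2/12) * L) + Real.exp (-(ε^2/12) * L) := add_le_add hA hB
    _ = 2 * (n:ℝ) ^ (-ε ^ 2 / 12) := by rw [hrpow]; ring
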